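/- A Newton polygon P of finite area is special (i.e., all elementary summands {ℓᵢ/hᵢ} in its canonical decomposition satisfy ℓᵢ ≥ hᵢ) if and only if P * {1/1} = P, where {1/1} is the elementary polygon of length 1 and height 1. -/

import Mathlib

open Pointwise MeasureTheory

/-- The positive quadrant in `ℝ²`. -/
def Q2 : Set (ℝ × ℝ) := {p | 0 ≤ p.1 ∧ 0 ≤ p.2}

/-- The elementary Newton polygon `{ℓ/h}`. -/
noncomputable def elemPoly (l h : ℝ) : Set (ℝ × ℝ) :=
  convexHull ℝ (({((0 : ℝ), h)} + Q2) ∪ ({(l, (0 : ℝ))} + Q2))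

/-- The sum (convex hull of the Minkowski sum) of the elementary polygons listed in `L`. -/
noncomputable def sumList (L : List (ℝ × ℝ)) : Set (ℝ × ℝ) :=
  convexHull ℝ (Q2 + (L.map (fun p => elemPoly p.1 p.2)).sum)

/-- The sum of two Newton polygons: convex hull of the Minkowski sum. -/
noncomputable def polySum (N₁ N₂ : Set (ℝ × ℝ)) : Set (ℝ × ℝ) :=
  convexHull ℝ (N₁ + N₂)

/-- The product of decompositions: on elementary polygons,
`{ℓ/h} * {ℓ'/h'} = {ℓℓ' / min(ℓh', ℓ'h)}`, extended bilinearly. -/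
def prodList (L₁ L₂ : List (ℝ × ℝ)) : List (ℝ × ℝ) :=
  L₁.flatMap fun p => L₂.map fun q => (p.1 * q.1, min (p.1 * q.2) (q.1 * p.2))

/-- All lengths and heights in the list are positive. -/
def PosList (L : List (ℝ × ℝ)) : Prop := ∀ p ∈ L, 0 < p.1 ∧ 0 < p.2

lemma q2_convex : Convex ℝ Q2 := by
  intro x hx y hy a b ha hb hab
  obtain ⟨hx1, hx2⟩ := hx
  obtain ⟨hy1, hy2⟩ := hy
  constructor <;> simp only [Prod.fst_add, Prod.snd_add, Prod.smul_fst, Prod.smul_snd,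
    smul_eq_mul] <;> positivity

lemma elem_convex (l h : ℝ) : Convex ℝ (elemPoly l h) := convex_convexHull ℝ _

lemma elem_sub {l h : ℝ} (hl : 0 < l) (hh : 0 ≤ h) :
    elemPoly l h ⊆ {p : ℝ × ℝ | 0 ≤ p.1 ∧ 0 ≤ p.2 ∧ l * h ≤ h * p.1 + l * p.2} := by
  apply convexHull_min
  · rintro x (hx | hx) <;>
    · obtain ⟨a, ha, b, hb, rfl⟩ := Set.mem_add.mp hx
      simp only [Set.mem_singleton_iff] at ha
      subst ha
      obtain ⟨hb1, hb2⟩ := hb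
      refine ⟨?_, ?_, ?_⟩ <;> simp only [Prod.fst_add, Prod.snd_add] <;> nlinarith [hl.le]
  · intro x hx y hy a b ha hb hab
    obtain ⟨hx1, hx2, hx3⟩ := hx
    obtain ⟨hy1, hy2, hy3⟩ := hy
    refine ⟨?_, ?_, ?_⟩ <;> simp only [Prod.fst_add, Prod.snd_add, Prod.smul_fst,
      Prod.smul_snd, smul_eq_mul]
    · positivity
    · positivity
    · have h1 := mul_le_mul_of_nonneg_left hx3 ha
      have h2 := mul_le_mul_of_nonneg_left hy3 hb
      have h3 : a * (l * h) + b * (l * h) = l * h := by rw [← add_mul, hab, one_mul]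
      linarith

lemma mem_elem (l h : ℝ) : ((0 : ℝ), h) ∈ elemPoly l h := by
  apply subset_convexHull
  left
  exact Set.mem_add.mpr ⟨(0, h), rfl, (0, 0), ⟨le_refl 0, le_refl 0⟩, by simp⟩

lemma sum_convex (L : List (ℝ × ℝ)) :
    Convex ℝ (Q2 + (L.map (fun p => elemPoly p.1 p.2)).sum) := by
  induction L with
  | nil => simpa using q2_convex
  | cons p L ih =>
      simp only [List.map_cons, List.sum_cons]
      rw [← add_assoc, add_comm Q2 (elemPoly p.1 p.2), add_assoc]
      exact (elem_convex p.1 p.2).add (by simpa using ih)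

lemma sumList_eq (L : List (ℝ × ℝ)) :
    sumList L = Q2 + (L.map (fun p => elemPoly p.1 p.2)).sum :=
  (sum_convex L).convexHull_eq

/-- the top-left vertex belongs to the polygon -/
lemma vertex_mem (L : List (ℝ × ℝ)) :
    ((0 : ℝ), (L.map Prod.snd).sum) ∈ Q2 + (L.map (fun p => elemPoly p.1 p.2)).sum := by
  induction L with
  | nil => simp [Q2]
  | cons p L ih =>
      simp only [List.map_cons, List.sum_cons]
      rw [← add_assoc, add_comm Q2 (elemPoly p.1 p.2), add_assoc]
      have : ((0 : ℝ), p.2 + (L.map Prod.snd).sum) =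
          ((0 : ℝ), p.2) + ((0 : ℝ), (L.map Prod.snd).sum) := by simp
      rw [this]
      exact Set.add_mem_add (mem_elem p.1 p.2) ih

/-- points on the vertical axis have height at least the total height -/
lemma height_bound (L : List (ℝ × ℝ)) (hL : PosList L) :
    ∀ x ∈ Q2 + (L.map (fun p => elemPoly p.1 p.2)).sum,
      0 ≤ x.1 ∧ (x.1 = 0 → (L.map Prod.snd).sum ≤ x.2) := by
  induction L with
  | nil =>
      intro x hx
      simp only [List.map_nil, List.sum_nil] at hx ⊢
      rw [show ((0 : Set (ℝ × ℝ))) = {0} from rfl] at hx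
      simp only [Set.add_singleton, add_zero, Set.image_id'] at hx
      exact ⟨hx.1, fun _ => hx.2⟩
  | cons p L ih =>
      intro x hx
      have hp := hL p List.mem_cons_self
      have hL' : PosList L := fun q hq => hL q (List.mem_cons_of_mem p hq)
      simp only [List.map_cons, List.sum_cons] at hx ⊢
      rw [← add_assoc, add_comm Q2 (elemPoly p.1 p.2), add_assoc] at hx
      obtain ⟨y, hy, z, hz, rfl⟩ := Set.mem_add.mp hx
      obtain ⟨hy1, hy2, hy3⟩ := elem_sub hp.1 hp.2.le hy
      obtain ⟨hz1, hz2⟩ := ih hL' z hz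
      refine ⟨by simpa using add_nonneg hy1 hz1, fun h0 => ?_⟩
      simp only [Prod.fst_add] at h0
      have hyz : y.1 = 0 ∧ z.1 = 0 := by constructor <;> linarith
      have h1 : p.2 ≤ y.2 := by
        have := hy3
        rw [hyz.1] at this
        nlinarith [hp.1]
      have h2 := hz2 hyz.2
      simp only [Prod.snd_add]
      linarith

lemma map_prodList (L : List (ℝ × ℝ)) :
    prodList L [((1 : ℝ), (1 : ℝ))] = L.map (fun p => (p.1, min p.1 p.2)) := by
  induction L with
  | nil => rfl
  | cons p L ih => simp [prodList, List.flatMap] at ih ⊢; exact ih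

/-- A Newton polygon is special iff all elementary summands of its canonical decomposition
satisfy `ℓᵢ ≥ hᵢ`, and this holds if and only if `P * {1/1} = P`. -/
theorem special_iff_mul_one (L : List (ℝ × ℝ)) (hL : PosList L)
    (hcanon : L.Pairwise fun p q => p.1 / p.2 ≠ q.1 / q.2) :
    (∀ p ∈ L, p.2 ≤ p.1) ↔
      sumList (prodList L [((1 : ℝ), (1 : ℝ))]) = sumList L := by
  constructor
  · intro h
    rw [map_prodList]
    congr 1
    have : L.map (fun p => (p.1, min p.1 p.2)) = L.map id := by
      apply List.map_congr_left
      intro p hp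
      have := h p hp
      simp [min_eq_right this]
    rw [this, List.map_id]
  · intro heq p hp
    by_contra hlt
    push_neg at hlt
    -- key point on the vertical axis
    set L' := L.map (fun p => (p.1, min p.1 p.2)) with hL'def
    have hL'pos : PosList L' := by
      intro q hq
      simp only [hL'def, List.mem_map] at hq
      obtain ⟨r, hr, rfl⟩ := hq
      obtain ⟨h1, h2⟩ := hL r hr
      exact ⟨h1, lt_min h1 h2⟩
    rw [map_prodList] at heq
    have hmem : ((0 : ℝ), (L'.map Prod.snd).sum) ∈ sumList L' := by
      rw [sumList_eq]; exact vertex_mem L'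
    rw [heq, sumList_eq] at hmem
    have hbd := (height_bound L hL _ hmem).2 rfl
    -- but the product heights sum is strictly smaller
    have hsum : (L'.map Prod.snd).sum < (L.map Prod.snd).sum := by
      rw [hL'def, List.map_map]
      apply List.sum_lt_sum
      · intro q _; exact min_le_right _ _
      · exact ⟨p, hp, by
          simp only [Function.comp_apply]
          exact (min_le_left _ _).trans_lt hlt⟩
    simp only at hbd hsum
    linarith
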